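/- arXiv:2503.10612 — 9 statements merged into one kernel-verified Lean document; each statement's English description precedes it below -/
import Mathlib

section
/- Let d ≥ 1 and let g : (0,∞) → ℝ be twice differentiable with g''(τ) ≥ 0 for all τ > 0. Then the functional Φ(ρ, m, E) := E − ‖m‖²/(2ρ) − ρ·g(1/ρ) is concave on the convex set Ω := {(ρ, m, E) ∈ ℝ × ℝ^d × ℝ : ρ > 0}. -/
/-- The perspective function `ρ ↦ ρ * g (1/ρ)` of a twice-differentiable convex
function `g` is convex on `(0, ∞)`. -/
lemma perspective_convexOn (g g' g'' : ℝ → ℝ)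
    (hg' : ∀ τ > (0 : ℝ), HasDerivAt g (g' τ) τ)
    (hg'' : ∀ τ > (0 : ℝ), HasDerivAt g' (g'' τ) τ)
    (hconv : ∀ τ > (0 : ℝ), 0 ≤ g'' τ) :
    ConvexOn ℝ (Set.Ioi (0 : ℝ)) (fun ρ => ρ * g (1 / ρ)) := by
  have hint : interior (Set.Ioi (0 : ℝ)) = Set.Ioi 0 := interior_Ioi
  have hD1 : ∀ ρ ∈ Set.Ioi (0 : ℝ),
      HasDerivAt (fun ρ => ρ * g (1 / ρ)) (g (1 / ρ) - g' (1 / ρ) / ρ) ρ := by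
    intro ρ hρ
    have hρp : (0:ℝ) < ρ := hρ
    have hρ0 : ρ ≠ 0 := ne_of_gt hρ
    have hinv : HasDerivAt (fun ρ : ℝ => 1 / ρ) (-(1 / ρ ^ 2)) ρ := by
      simpa using (hasDerivAt_inv hρ0)
    have hcomp : HasDerivAt (fun ρ : ℝ => g (1 / ρ)) (g' (1 / ρ) * (-(1 / ρ ^ 2))) ρ :=
      (hg' _ (one_div_pos.mpr hρp)).comp ρ hinv
    have := (hasDerivAt_id ρ).mul hcomp
    refine this.congr_deriv ?_
    simp only [id]
    field_simp
    ring
  have hD2 : ∀ ρ ∈ Set.Ioi (0 : ℝ),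
      HasDerivAt (fun ρ => g (1 / ρ) - g' (1 / ρ) / ρ) (g'' (1 / ρ) / ρ ^ 3) ρ := by
    intro ρ hρ
    have hρp : (0:ℝ) < ρ := hρ
    have hρ0 : ρ ≠ 0 := ne_of_gt hρ
    have hinv : HasDerivAt (fun ρ : ℝ => 1 / ρ) (-(1 / ρ ^ 2)) ρ := by
      simpa using (hasDerivAt_inv hρ0)
    have h1 : HasDerivAt (fun ρ : ℝ => g (1 / ρ)) (g' (1 / ρ) * (-(1 / ρ ^ 2))) ρ :=
      (hg' _ (one_div_pos.mpr hρp)).comp ρ hinv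
    have h2 : HasDerivAt (fun ρ : ℝ => g' (1 / ρ)) (g'' (1 / ρ) * (-(1 / ρ ^ 2))) ρ :=
      (hg'' _ (one_div_pos.mpr hρp)).comp ρ hinv
    have h3 : HasDerivAt (fun ρ : ℝ => g' (1 / ρ) / ρ)
        (g'' (1 / ρ) * (-(1 / ρ ^ 2)) / ρ + g' (1 / ρ) * (-(1 / ρ ^ 2))) ρ := by
      have := h2.div (hasDerivAt_id ρ) hρ0
      refine this.congr_deriv ?_
      simp only [id]
      field_simp
      ring
    have := h1.sub h3
    refine this.congr_deriv ?_
    field_simp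
    ring
  refine convexOn_of_hasDerivWithinAt2_nonneg (convex_Ioi 0) ?_
    (f' := fun ρ => g (1 / ρ) - g' (1 / ρ) / ρ) (f'' := fun ρ => g'' (1 / ρ) / ρ ^ 3)
    ?_ ?_ ?_
  · intro ρ hρ
    exact (hD1 ρ hρ).continuousAt.continuousWithinAt
  · intro ρ hρ
    rw [hint] at hρ ⊢
    exact (hD1 ρ hρ).hasDerivWithinAt
  · intro ρ hρ
    rw [hint] at hρ ⊢
    exact (hD2 ρ hρ).hasDerivWithinAt
  · intro ρ hρ
    rw [hint] at hρ
    have hρ' : (0:ℝ) < ρ := hρ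
    have := hconv (1 / ρ) (by positivity)
    positivity

/-- Proposition 2.6 (Concave constraint): if `g` is a twice differentiable
convex function on `(0,∞)` (playing the role of the energy isentrope
`τ ↦ e_{s₀}(τ)`), then the functional
`Φ(ρ, m, E) = E − ‖m‖²/(2ρ) − ρ·g(1/ρ)` is concave on the convex set
`{(ρ, m, E) : ρ > 0}`. -/
theorem stmt_0 (d : ℕ) (hd : 1 ≤ d) (g g' g'' : ℝ → ℝ)
    (hg' : ∀ τ > (0 : ℝ), HasDerivAt g (g' τ) τ)
    (hg'' : ∀ τ > (0 : ℝ), HasDerivAt g' (g'' τ) τ)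
    (hconv : ∀ τ > (0 : ℝ), 0 ≤ g'' τ) :
    ConcaveOn ℝ {u : ℝ × EuclideanSpace ℝ (Fin d) × ℝ | 0 < u.1}
      (fun u => u.2.2 - ‖u.2.1‖ ^ 2 / (2 * u.1) - u.1 * g (1 / u.1)) := by
  have hpersp := perspective_convexOn g g' g'' hg' hg'' hconv
  constructor
  · intro x hx y hy a b ha hb hab
    simp only [Set.mem_setOf_eq] at *
    have : 0 < a * x.1 + b * y.1 := by
      rcases lt_or_eq_of_le ha with h | h
      · have hb' : 0 ≤ b * y.1 := mul_nonneg hb hy.le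
        nlinarith [mul_pos h hx]
      · have : b = 1 := by linarith
        simp [← h, this, hy]
    simpa using this
  · rintro ⟨ρ₁, m₁, E₁⟩ hx ⟨ρ₂, m₂, E₂⟩ hy a b ha hb hab
    simp only [Set.mem_setOf_eq] at hx hy
    have hρ₁ : (0:ℝ) < ρ₁ := hx
    have hρ₂ : (0:ℝ) < ρ₂ := hy
    have hρ : 0 < a * ρ₁ + b * ρ₂ := by
      rcases lt_or_eq_of_le ha with h | h
      · nlinarith [mul_pos h hρ₁, mul_nonneg hb hρ₂.le]
      · have : b = 1 := by linarith
        simp [← h, this, hρ₂]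
    -- g part: convexity of the perspective
    have hgpart : (a * ρ₁ + b * ρ₂) * g (1 / (a * ρ₁ + b * ρ₂)) ≤
        a * (ρ₁ * g (1 / ρ₁)) + b * (ρ₂ * g (1 / ρ₂)) := by
      have := hpersp.2 (Set.mem_Ioi.mpr hρ₁) (Set.mem_Ioi.mpr hρ₂) ha hb hab
      simpa [smul_eq_mul] using this
    -- norm part
    have hN : ‖a • m₁ + b • m₂‖ ≤ a * ‖m₁‖ + b * ‖m₂‖ := by
      calc ‖a • m₁ + b • m₂‖ ≤ ‖a • m₁‖ + ‖b • m₂‖ := norm_add_le _ _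
        _ = a * ‖m₁‖ + b * ‖m₂‖ := by
            rw [norm_smul, norm_smul, Real.norm_eq_abs, Real.norm_eq_abs,
              abs_of_nonneg ha, abs_of_nonneg hb]
    have hnormpart : ‖a • m₁ + b • m₂‖ ^ 2 / (2 * (a * ρ₁ + b * ρ₂)) ≤
        a * (‖m₁‖ ^ 2 / (2 * ρ₁)) + b * (‖m₂‖ ^ 2 / (2 * ρ₂)) := by
      set A := ‖m₁‖ with hA
      set B := ‖m₂‖ with hB
      have hA0 : 0 ≤ A := norm_nonneg _
      have hB0 : 0 ≤ B := norm_nonneg _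
      have hN0 : 0 ≤ ‖a • m₁ + b • m₂‖ := norm_nonneg _
      have hNsq : ‖a • m₁ + b • m₂‖ ^ 2 ≤ (a * A + b * B) ^ 2 := by
        have : 0 ≤ a * A + b * B := by positivity
        nlinarith
      have key : (a * A + b * B) ^ 2 / (2 * (a * ρ₁ + b * ρ₂)) ≤
          a * (A ^ 2 / (2 * ρ₁)) + b * (B ^ 2 / (2 * ρ₂)) := by
        rw [div_le_iff₀ (by positivity)]
        have expand : (a * (A ^ 2 / (2 * ρ₁)) + b * (B ^ 2 / (2 * ρ₂))) *
            (2 * (a * ρ₁ + b * ρ₂)) =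
            a * A ^ 2 * (a * ρ₁ + b * ρ₂) / ρ₁ + b * B ^ 2 * (a * ρ₁ + b * ρ₂) / ρ₂ := by
          field_simp
        rw [expand]
        have h1 : a * A ^ 2 * (a * ρ₁ + b * ρ₂) / ρ₁ + b * B ^ 2 * (a * ρ₁ + b * ρ₂) / ρ₂
            - (a * A + b * B) ^ 2 = a * b * (A * ρ₂ - B * ρ₁) ^ 2 / (ρ₁ * ρ₂) := by
          field_simp
          ring
        have h2 : 0 ≤ a * b * (A * ρ₂ - B * ρ₁) ^ 2 / (ρ₁ * ρ₂) := by positivity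
        linarith [h1 ▸ h2]
      calc ‖a • m₁ + b • m₂‖ ^ 2 / (2 * (a * ρ₁ + b * ρ₂))
          ≤ (a * A + b * B) ^ 2 / (2 * (a * ρ₁ + b * ρ₂)) := by
            apply div_le_div_of_nonneg_right hNsq (by positivity) |>.trans_eq rfl
        _ ≤ a * (A ^ 2 / (2 * ρ₁)) + b * (B ^ 2 / (2 * ρ₂)) := key
    simp only [smul_eq_mul, Prod.smul_mk, Prod.mk_add_mk, Prod.fst, Prod.snd]
    linarith [hgpart, hnormpart]
end

section
/- Let τ₀ > 0 and let e : (0,∞) → ℝ be three times continuously differentiable with e''(τ) > 0 for all τ ≥ τ₀, and define the pressure p(τ) = −e'(τ), the isentropic bulk modulus K(τ) = τ·e''(τ) and the fundamental derivative G(τ) = −τ·e'''(τ)/(2·e''(τ)). Assume there is g₁ > 1 with G(τ) ≥ g₁ for all τ ≥ τ₀. Then there exists ε₀ > 0 (one may take ε₀ = 2(g₁ − 1)) such that for every ε ∈ (0, ε₀), setting γ = 1 + ε, C = K(τ₀)·τ₀^γ/γ, p∞ = K(τ₀)/γ − p(τ₀), and q = e(τ₀) − τ₀·(p(τ₀) +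 γ·p∞)/(γ − 1), the stiffened-gas isentrope e_st(τ) := q + p∞·τ + (C/(γ − 1))·τ^{1−γ} satisfies e_st(τ) ≥ e(τ) for all τ ≥ τ₀. -/
open Real Set

/-- Lemma 5.3 (Expansion wave): let `e` be a three-times continuously
differentiable (oracle) energy isentrope on `(0,∞)` with `e'' > 0` on
`[τ₀,∞)`, pressure `p(τ) = −e'(τ)`, bulk modulus `K(τ) = τ e''(τ)` and
fundamental derivative `G(τ) = −τ e'''(τ)/(2 e''(τ))`.  If `G ≥ g₁ > 1` on
`[τ₀,∞)`, then there is `ε₀ > 0` such that for every `ε ∈ (0, ε₀)` the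
stiffened-gas isentrope matching `e`, `p` and `K` at `τ₀` (with
`γ = 1 + ε`, `C = K(τ₀) τ₀^γ / γ`, `p∞ = K(τ₀)/γ − p(τ₀)`,
`q = e(τ₀) − τ₀ (p(τ₀) + γ p∞)/(γ − 1)`) lies above `e` on `[τ₀,∞)`. -/
theorem stmt_4 (τ₀ : ℝ) (hτ₀ : 0 < τ₀) (e e' e'' e''' : ℝ → ℝ)
    (hd1 : ∀ τ > (0 : ℝ), HasDerivAt e (e' τ) τ)
    (hd2 : ∀ τ > (0 : ℝ), HasDerivAt e' (e'' τ) τ)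
    (hd3 : ∀ τ > (0 : ℝ), HasDerivAt e'' (e''' τ) τ)
    (hcont : ContinuousOn e''' (Set.Ioi (0 : ℝ)))
    (hconv : ∀ τ ≥ τ₀, 0 < e'' τ)
    (g₁ : ℝ) (hg₁ : 1 < g₁)
    (hG : ∀ τ ≥ τ₀, g₁ ≤ -τ * e''' τ / (2 * e'' τ)) :
    ∃ ε₀ > (0 : ℝ), ∀ ε, 0 < ε → ε < ε₀ →
      ∀ τ ≥ τ₀,
        e τ ≤
          (e τ₀ - τ₀ * ((-e' τ₀) + (1 + ε) * ((τ₀ * e'' τ₀) / (1 + ε) - (-e' τ₀)))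
              / ((1 + ε) - 1))
          + ((τ₀ * e'' τ₀) / (1 + ε) - (-e' τ₀)) * τ
          + (((τ₀ * e'' τ₀) * τ₀ ^ (1 + ε) / (1 + ε)) / ((1 + ε) - 1))
              * τ ^ (1 - (1 + ε)) := by
  refine ⟨2 * (g₁ - 1), by linarith, ?_⟩
  intro ε hε hεlt τ hτ
  have hτpos : 0 < τ := lt_of_lt_of_le hτ₀ hτ
  have hγ : (0 : ℝ) < 1 + ε := by linarith
  have hγ1 : (1 : ℝ) + ε ≠ 0 := hγ.ne'
  have hεne : ε ≠ 0 := hε.ne'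
  rw [show (1 : ℝ) - (1 + ε) = -ε from by ring]
  set K₀ : ℝ := τ₀ * e'' τ₀ with hK₀def
  have hK₀ : 0 < K₀ := mul_pos hτ₀ (hconv τ₀ le_rfl)
  set B : ℝ := K₀ / (1 + ε) - (-e' τ₀) with hBdef
  set D : ℝ := K₀ * τ₀ ^ (1 + ε) / (1 + ε) / ((1 + ε) - 1) with hDdef
  set q : ℝ := e τ₀ - τ₀ * (-e' τ₀ + (1 + ε) * B) / ((1 + ε) - 1) with hqdef
  set est : ℝ → ℝ := fun x => q + B * x + D * x ^ (-ε) with hestdef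
  set est' : ℝ → ℝ := fun x => B + D * (-ε * x ^ (-ε - 1)) with hest'def
  set est'' : ℝ → ℝ := fun x => D * (-ε * ((-ε - 1) * x ^ (-ε - 2))) with hest''def
  -- derivatives of the stiffened-gas isentrope
  have hDest : ∀ x, 0 < x → HasDerivAt est (est' x) x := by
    intro x hx
    have h1 : HasDerivAt (fun y : ℝ => y ^ (-ε)) (-ε * x ^ (-ε - 1)) x := by
      have := Real.hasDerivAt_rpow_const (x := x) (p := -ε) (Or.inl hx.ne')
      rwa [show -ε - 1 = -ε - 1 from rfl] at this
    have h2 := ((hasDerivAt_const x q).add ((hasDerivAt_id x).const_mul B)).add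
      (h1.const_mul D)
    have h3 : est' x = 0 + B * 1 + D * (-ε * x ^ (-ε - 1)) := by
      simp [hest'def]
    rw [h3]
    exact h2
  have hDest' : ∀ x, 0 < x → HasDerivAt est' (est'' x) x := by
    intro x hx
    have h1 : HasDerivAt (fun y : ℝ => y ^ (-ε - 1)) ((-ε - 1) * x ^ (-ε - 2)) x := by
      have := Real.hasDerivAt_rpow_const (x := x) (p := -ε - 1) (Or.inl hx.ne')
      rwa [show -ε - 1 - 1 = -ε - 2 from by ring] at this
    have h2 := (hasDerivAt_const x B).add ((h1.const_mul (-ε)).const_mul D)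
    have h3 : est'' x = 0 + D * (-ε * ((-ε - 1) * x ^ (-ε - 2))) := by
      simp [hest''def]
    rw [h3]
    exact h2
  -- the auxiliary function f
  set f : ℝ → ℝ := fun x => e'' x * x ^ (2 + ε) with hfdef
  have hfder : ∀ x, 0 < x →
      HasDerivAt f (e''' x * x ^ (2 + ε) + e'' x * ((2 + ε) * x ^ (1 + ε))) x := by
    intro x hx
    have h1 : HasDerivAt (fun y : ℝ => y ^ (2 + ε)) ((2 + ε) * x ^ (1 + ε)) x := by
      have := Real.hasDerivAt_rpow_const (x := x) (p := 2 + ε) (Or.inl hx.ne')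
      rwa [show (2 : ℝ) + ε - 1 = 1 + ε from by ring] at this
    exact (hd3 x hx).mul h1
  have hf_anti : AntitoneOn f (Ici τ₀) := by
    apply antitoneOn_of_deriv_nonpos (convex_Ici τ₀)
    · exact fun x hx => ((hfder x (hτ₀.trans_le hx)).continuousAt).continuousWithinAt
    · intro x hx
      rw [interior_Ici] at hx
      exact (hfder x (hτ₀.trans hx)).differentiableAt.differentiableWithinAt
    · intro x hx
      rw [interior_Ici] at hx
      have hxpos : 0 < x := hτ₀.trans hx
      rw [(hfder x hxpos).deriv]
      have hE : 0 < e'' x := hconv x hx.le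
      have hGx := hG x hx.le
      have h2 : g₁ * (2 * e'' x) ≤ -x * e''' x :=
        (le_div_iff₀ (by positivity)).mp hGx
      have hsplit : x ^ (2 + ε) = x * x ^ (1 + ε) := by
        rw [show (2 : ℝ) + ε = 1 + (1 + ε) from by ring, Real.rpow_add hxpos,
          Real.rpow_one]
      have hpow : 0 < x ^ (1 + ε) := Real.rpow_pos_of_pos hxpos _
      have hb : x * e''' x + (2 + ε) * e'' x ≤ 0 := by nlinarith
      calc e''' x * x ^ (2 + ε) + e'' x * ((2 + ε) * x ^ (1 + ε))
          = x ^ (1 + ε) * (x * e''' x + (2 + ε) * e'' x) := by rw [hsplit]; ring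
        _ ≤ 0 := mul_nonpos_of_nonneg_of_nonpos hpow.le hb
  -- est'' in terms of f τ₀
  have hfτ₀ : f τ₀ = K₀ * τ₀ ^ (1 + ε) := by
    simp only [hfdef]
    rw [show (2 : ℝ) + ε = 1 + (1 + ε) from by ring, Real.rpow_add hτ₀, Real.rpow_one,
      hK₀def]
    ring
  have hDval : D * (-ε) * (-ε - 1) = K₀ * τ₀ ^ (1 + ε) := by
    rw [hDdef, show (1 : ℝ) + ε - 1 = ε from by ring]
    field_simp
    ring
  have hest''eq : ∀ x, 0 < x → est'' x = f τ₀ * x ^ (-(2 + ε)) := by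
    intro x hx
    simp only [hest''def]
    rw [hfτ₀, show -ε - 2 = -(2 + ε) from by ring, ← hDval]
    ring
  have hh'' : ∀ x, τ₀ ≤ x → 0 ≤ est'' x - e'' x := by
    intro x hx
    have hxpos : 0 < x := hτ₀.trans_le hx
    have he''eq : e'' x = f x * x ^ (-(2 + ε)) := by
      simp only [hfdef]
      rw [mul_assoc, ← Real.rpow_add hxpos,
        show (2 + ε) + -(2 + ε) = (0 : ℝ) from by ring, Real.rpow_zero, mul_one]
    rw [hest''eq x hxpos, he''eq]
    have hanti : f x ≤ f τ₀ := hf_anti self_mem_Ici (Set.mem_Ici.mpr hx) hx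
    have hp : (0 : ℝ) < x ^ (-(2 + ε)) := Real.rpow_pos_of_pos hxpos _
    have := mul_le_mul_of_nonneg_right hanti hp.le
    linarith
  -- h' := est' - e' is monotone on [τ₀,∞) and vanishes at τ₀
  have hh'der : ∀ x, 0 < x → HasDerivAt (fun y => est' y - e' y) (est'' x - e'' x) x :=
    fun x hx => (hDest' x hx).sub (hd2 x hx)
  have hh'mono : MonotoneOn (fun y => est' y - e' y) (Ici τ₀) := by
    apply monotoneOn_of_deriv_nonneg (convex_Ici τ₀)
    · exact fun x hx => ((hh'der x (hτ₀.trans_le hx)).continuousAt).continuousWithinAt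
    · intro x hx
      rw [interior_Ici] at hx
      exact (hh'der x (hτ₀.trans hx)).differentiableAt.differentiableWithinAt
    · intro x hx
      rw [interior_Ici] at hx
      rw [(hh'der x (hτ₀.trans hx)).deriv]
      exact hh'' x hx.le
  have hid0 : τ₀ ^ (1 + ε) * τ₀ ^ (-ε - 1) = 1 := by
    rw [← Real.rpow_add hτ₀, show (1 + ε) + (-ε - 1) = (0 : ℝ) from by ring,
      Real.rpow_zero]
  have hid1 : τ₀ ^ (1 + ε) * τ₀ ^ (-ε) = τ₀ := by
    rw [← Real.rpow_add hτ₀, show (1 + ε) + (-ε) = (1 : ℝ) from by ring, Real.rpow_one]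
  have hh'τ₀ : est' τ₀ - e' τ₀ = 0 := by
    have h1 : D * (-ε * τ₀ ^ (-ε - 1)) = -(K₀ / (1 + ε)) := by
      calc D * (-ε * τ₀ ^ (-ε - 1))
          = -(K₀ / (1 + ε)) * (τ₀ ^ (1 + ε) * τ₀ ^ (-ε - 1)) := by
            rw [hDdef, show (1 : ℝ) + ε - 1 = ε from by ring]
            field_simp
        _ = -(K₀ / (1 + ε)) := by rw [hid0, mul_one]
    simp only [hest'def, h1, hBdef]
    ring
  -- h := est - e is monotone on [τ₀,∞) and vanishes at τ₀
  have hhder : ∀ x, 0 < x → HasDerivAt (fun y => est y - e y) (est' x - e' x) x :=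
    fun x hx => (hDest x hx).sub (hd1 x hx)
  have hhmono : MonotoneOn (fun y => est y - e y) (Ici τ₀) := by
    apply monotoneOn_of_deriv_nonneg (convex_Ici τ₀)
    · exact fun x hx => ((hhder x (hτ₀.trans_le hx)).continuousAt).continuousWithinAt
    · intro x hx
      rw [interior_Ici] at hx
      exact (hhder x (hτ₀.trans hx)).differentiableAt.differentiableWithinAt
    · intro x hx
      rw [interior_Ici] at hx
      rw [(hhder x (hτ₀.trans hx)).deriv]
      have := hh'mono self_mem_Ici (Set.mem_Ici.mpr hx.le) hx.le
      simp only at this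
      linarith [hh'τ₀]
  have hhτ₀ : est τ₀ - e τ₀ = 0 := by
    have h2 : D * τ₀ ^ (-ε) = K₀ * τ₀ / ((1 + ε) * ε) := by
      calc D * τ₀ ^ (-ε)
          = K₀ / ((1 + ε) * ε) * (τ₀ ^ (1 + ε) * τ₀ ^ (-ε)) := by
            rw [hDdef, show (1 : ℝ) + ε - 1 = ε from by ring]
            field_simp
        _ = K₀ * τ₀ / ((1 + ε) * ε) := by rw [hid1]; ring
    simp only [hestdef, h2, hqdef, hBdef, show (1 : ℝ) + ε - 1 = ε from by ring]
    field_simp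
    ring
  have hfin := hhmono self_mem_Ici (Set.mem_Ici.mpr hτ) hτ
  simp only at hfin
  rw [hhτ₀] at hfin
  have hgoal : e τ ≤ est τ := by linarith
  simpa [hestdef, hqdef] using hgoal
end

section
/- Let e_s : (0,∞) → ℝ be three times differentiable and Γ : (0,∞) → ℝ twice differentiable; set p_s(τ) = −e_s'(τ), K_s(τ) = τ·e_s''(τ), π(τ, e) = p_s(τ) + (Γ(τ)/τ)·(e − e_s(τ)), and κ(τ, e) = K_s(τ) + (Γ(τ)·(Γ(τ)+1)/τ − Γ'(τ))·(e − e_s(τ)). Then for all τ > 0 and e ∈ ℝ with κ(τ, e) ≠ 0, the fundamental derivative 𝖦(τ, e) := (1/2)·(1 − (τ/κ(τ,e))·(∂_τ κ(τ, e) − π(τ, e)·∂_e κ(τ, e))) satisfies 𝖦(τ, e) = (1/2)·[1 − (τ·K_s'(τ) − (τ·Γ''(τ) − 2·Γ'(τ)·Γ(τ) + (Γ(τ)+1)·(Γ(τ)·(Γ(τ)+1)/τ − Γ'(τ)))·(e − e_s(τ))) / (K_s(τ) + (Γ(τ)·(Γ(τ)+1)/τ − Γ'(τ))·(e − e_s(τ)))].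 -/
/-- Lemma B.1, second identity (B.3): for a Mie-Grüneisen pressure law
`π(τ, e) = p_s(τ) + (Γ(τ)/τ)(e − e_s(τ))` with bulk modulus
`κ(τ, e) = K_s(τ) + (Γ(Γ+1)/τ − Γ')(e − e_s(τ))`, `K_s(τ) = τ e_s''(τ)`, the
fundamental derivative `𝖦(τ,e) = ½(1 − (τ/κ)(∂_τ κ − π ∂_e κ))` equals
`½[1 − (τ K_s' − (τΓ'' − 2Γ'Γ + (Γ+1)(Γ(Γ+1)/τ − Γ'))(e − e_s))
      /(K_s + (Γ(Γ+1)/τ − Γ')(e − e_s))]`. -/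
theorem stmt_7 (es es' es'' es''' Γ Γ' Γ'' : ℝ → ℝ)
    (hes' : ∀ τ > (0 : ℝ), HasDerivAt es (es' τ) τ)
    (hes'' : ∀ τ > (0 : ℝ), HasDerivAt es' (es'' τ) τ)
    (hes''' : ∀ τ > (0 : ℝ), HasDerivAt es'' (es''' τ) τ)
    (hΓ' : ∀ τ > (0 : ℝ), HasDerivAt Γ (Γ' τ) τ)
    (hΓ'' : ∀ τ > (0 : ℝ), HasDerivAt Γ' (Γ'' τ) τ) :
    ∀ τ > (0 : ℝ), ∀ E : ℝ,
      (τ * es'' τ + (Γ τ * (Γ τ + 1) / τ - Γ' τ) * (E - es τ)) ≠ 0 →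
      (1 / 2) * (1 - (τ / (τ * es'' τ + (Γ τ * (Γ τ + 1) / τ - Γ' τ) * (E - es τ)))
          * (deriv (fun σ =>
                σ * es'' σ + (Γ σ * (Γ σ + 1) / σ - Γ' σ) * (E - es σ)) τ
            - (-es' τ + (Γ τ / τ) * (E - es τ))
              * (Γ τ * (Γ τ + 1) / τ - Γ' τ)))
      = (1 / 2) * (1 -
          (τ * deriv (fun σ => σ * es'' σ) τ
            - (τ * Γ'' τ - 2 * Γ' τ * Γ τ
                + (Γ τ + 1) * (Γ τ * (Γ τ + 1) / τ - Γ' τ)) * (E - es τ))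
          / (τ * es'' τ + (Γ τ * (Γ τ + 1) / τ - Γ' τ) * (E - es τ))) := by
  intro τ hτ E hκ
  have hτ0 : τ ≠ 0 := ne_of_gt hτ
  have h1 : HasDerivAt (fun σ => σ * es'' σ) (1 * es'' τ + τ * es''' τ) τ :=
    (hasDerivAt_id τ).mul (hes''' τ hτ)
  have h2 : HasDerivAt (fun σ => Γ σ * (Γ σ + 1) / σ)
      (((Γ' τ * (Γ τ + 1) + Γ τ * Γ' τ) * τ - Γ τ * (Γ τ + 1) * 1) / τ ^ 2) τ :=
    ((hΓ' τ hτ).mul ((hΓ' τ hτ).add_const 1)).div (hasDerivAt_id τ) hτ0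
  have h3 : HasDerivAt (fun σ => (Γ σ * (Γ σ + 1) / σ - Γ' σ) * (E - es σ))
      ((((Γ' τ * (Γ τ + 1) + Γ τ * Γ' τ) * τ - Γ τ * (Γ τ + 1) * 1) / τ ^ 2 - Γ'' τ)
        * (E - es τ) + (Γ τ * (Γ τ + 1) / τ - Γ' τ) * (0 - es' τ)) τ :=
    (h2.sub (hΓ'' τ hτ)).mul ((hasDerivAt_const τ E).sub (hes' τ hτ))
  have hfull : HasDerivAt (fun σ => σ * es'' σ + (Γ σ * (Γ σ + 1) / σ - Γ' σ) * (E - es σ)) _ τ :=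
    h1.add h3
  rw [hfull.deriv, h1.deriv]
  rw [show ∀ a b c : ℝ, τ / a * (b - c) = τ * (b - c) / a from fun a b c => by ring]
  have key : τ * (1 * es'' τ + τ * es''' τ +
      ((((Γ' τ * (Γ τ + 1) + Γ τ * Γ' τ) * τ - Γ τ * (Γ τ + 1) * 1) / τ ^ 2 - Γ'' τ)
        * (E - es τ) + (Γ τ * (Γ τ + 1) / τ - Γ' τ) * (0 - es' τ))
      - (-es' τ + Γ τ / τ * (E - es τ)) * (Γ τ * (Γ τ + 1) / τ - Γ' τ))
      = τ * (1 * es'' τ + τ * es''' τ)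
        - (τ * Γ'' τ - 2 * Γ' τ * Γ τ
            + (Γ τ + 1) * (Γ τ * (Γ τ + 1) / τ - Γ' τ)) * (E - es τ) := by
    field_simp
    ring
  rw [key]
end

section
/- Let K_s : (0,∞) → ℝ be differentiable with K_s(τ) > 0 and K_s'(τ) ≤ 0 for all τ > 0, and let Γ : (0,∞) → ℝ be twice differentiable with Γ(τ) > 0, Γ'(τ) ≤ 0 and Γ''(τ) ≥ 0 for all τ > 0. Let m ∈ ℝ be such that m ≤ −σ·K_s'(σ)/K_s(σ) and m ≤ Γ(σ) + 1 for all σ > 0. Then for every τ > 0 and every Δ ≥ 0, the quantity 𝖦 := (1/2)·[1 − (τ·K_s'(τ) − (τ·Γ''(τ) − 2·Γ'(τ)·Γ(τ) + (Γ(τ)+1)·(Γ(τ)·(Γ(τ)+1)/τ − Γ'(τ)))·Δ) / (K_s(τ) + (Γ(τ)·(Γ(τ)+1)/τ − Γ'(τ))·Δ)] satisfies 𝖦 ≥ (1/2)·(1 + m). -/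
/-- Proposition B.2: for a Mie-Grüneisen EOS with positive decreasing
convex Grüneisen coefficient `Γ`, positive decreasing reference bulk modulus
`K_s`, and energy offset `Δ = e − e_s(τ) ≥ 0`, the fundamental derivative
given by formula (B.3) is bounded below by `½(1 + m)` whenever
`m ≤ −σ K_s'(σ)/K_s(σ)` and `m ≤ Γ(σ) + 1` for all `σ > 0`. -/
theorem stmt_8 (Ks Ks' Γ Γ' Γ'' : ℝ → ℝ)
    (hKs' : ∀ τ > (0 : ℝ), HasDerivAt Ks (Ks' τ) τ)
    (hΓ' : ∀ τ > (0 : ℝ), HasDerivAt Γ (Γ' τ) τ)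
    (hΓ'' : ∀ τ > (0 : ℝ), HasDerivAt Γ' (Γ'' τ) τ)
    (hKpos : ∀ τ > (0 : ℝ), 0 < Ks τ)
    (hKdec : ∀ τ > (0 : ℝ), Ks' τ ≤ 0)
    (hΓpos : ∀ τ > (0 : ℝ), 0 < Γ τ)
    (hΓdec : ∀ τ > (0 : ℝ), Γ' τ ≤ 0)
    (hΓconv : ∀ τ > (0 : ℝ), 0 ≤ Γ'' τ)
    (m : ℝ)
    (hm1 : ∀ σ > (0 : ℝ), m ≤ -σ * Ks' σ / Ks σ)
    (hm2 : ∀ σ > (0 : ℝ), m ≤ Γ σ + 1) :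
    ∀ τ > (0 : ℝ), ∀ Δ ≥ (0 : ℝ),
      (1 / 2) * (1 + m) ≤
        (1 / 2) * (1 -
          (τ * Ks' τ
            - (τ * Γ'' τ - 2 * Γ' τ * Γ τ
                + (Γ τ + 1) * (Γ τ * (Γ τ + 1) / τ - Γ' τ)) * Δ)
          / (Ks τ + (Γ τ * (Γ τ + 1) / τ - Γ' τ) * Δ)) := by
  intro τ hτ Δ hΔ
  set c : ℝ := Γ τ * (Γ τ + 1) / τ - Γ' τ with hc_def
  have hΓp := hΓpos τ hτ
  have hΓd := hΓdec τ hτ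
  have hΓc := hΓconv τ hτ
  have hKp := hKpos τ hτ
  have hc : 0 ≤ c := by
    have h1 : 0 ≤ Γ τ * (Γ τ + 1) / τ := by positivity
    simp only [hc_def]; linarith
  have hD : 0 < Ks τ + c * Δ :=
    add_pos_of_pos_of_nonneg hKp (mul_nonneg hc hΔ)
  set N : ℝ := τ * Ks' τ - (τ * Γ'' τ - 2 * Γ' τ * Γ τ + (Γ τ + 1) * c) * Δ with hN_def
  -- key inequality: m * D ≤ -N
  have hKm : m * Ks τ ≤ -τ * Ks' τ := (le_div_iff₀ hKp).mp (hm1 τ hτ)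
  have hcoef : (m - (Γ τ + 1)) * c - τ * Γ'' τ + 2 * Γ' τ * Γ τ ≤ 0 := by
    have h1 : (m - (Γ τ + 1)) * c ≤ 0 :=
      mul_nonpos_of_nonpos_of_nonneg (by linarith [hm2 τ hτ]) hc
    have h2 : 0 ≤ τ * Γ'' τ := mul_nonneg hτ.le hΓc
    have h3 : Γ' τ * Γ τ ≤ 0 := mul_nonpos_of_nonpos_of_nonneg hΓd hΓp.le
    linarith
  have hmD : m * (Ks τ + c * Δ) ≤ -N := by
    have h4 : ((m - (Γ τ + 1)) * c - τ * Γ'' τ + 2 * Γ' τ * Γ τ) * Δ ≤ 0 :=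
      mul_nonpos_of_nonpos_of_nonneg hcoef hΔ
    simp only [hN_def]
    nlinarith [h4, hKm]
  have hdiv : m ≤ -N / (Ks τ + c * Δ) := (le_div_iff₀ hD).mpr hmD
  have hfin : m ≤ -(N / (Ks τ + c * Δ)) := by rw [neg_div] at hdiv; exact hdiv
  linarith
end

section
/- Let A > 0, B > 0, Γ₀ > 0 and τ₀ > 0, and define K_cold(τ) := A·B·(B+1)·(τ/τ₀)^{−(B+1)} for τ > 0. Then for every τ > 0 and every Δ ≥ 0, the fundamental derivative of the simple MACAW equation of state, 𝖦 := (1/2)·[1 − (τ·K_cold'(τ) − (Γ₀+1)·(Γ₀·(Γ₀+1)/τ)·Δ) / (K_cold(τ) + (Γ₀·(Γ₀+1)/τ)·Δ)], satisfies 𝖦 ≥ (1/2)·(1 + min(B+1, Γ₀+1)), and this lower bound is strictly greater than 1. -/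
open Real

/-- Section 6.1: the fundamental derivative of the simple MACAW equation of
state (a Mie-Grüneisen EOS with constant Grüneisen coefficient `Γ₀` and cold
bulk modulus `K_cold(τ) = AB(B+1)(τ/τ₀)^{−(B+1)}`) satisfies
`𝖦 ≥ ½(1 + min(B+1, Γ₀+1)) > 1` for every `τ > 0` and every energy offset
`Δ = e − e_cold(τ) ≥ 0`. -/
theorem stmt_9 (A B Γ₀ τ₀ : ℝ) (hA : 0 < A) (hB : 0 < B) (hΓ₀ : 0 < Γ₀)
    (hτ₀ : 0 < τ₀) :
    ∀ τ > (0 : ℝ), ∀ Δ ≥ (0 : ℝ),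
      (1 / 2) * (1 + min (B + 1) (Γ₀ + 1)) ≤
        (1 / 2) * (1 -
          (τ * deriv (fun σ => A * B * (B + 1) * (σ / τ₀) ^ (-(B + 1))) τ
            - (Γ₀ + 1) * (Γ₀ * (Γ₀ + 1) / τ) * Δ)
          / (A * B * (B + 1) * (τ / τ₀) ^ (-(B + 1))
            + (Γ₀ * (Γ₀ + 1) / τ) * Δ)) ∧
      1 < (1 / 2) * (1 + min (B + 1) (Γ₀ + 1)) := by
  intro τ hτ Δ hΔ
  have hx : 0 < τ / τ₀ := div_pos hτ hτ₀
  -- derivative computation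
  have h1 : HasDerivAt (fun σ : ℝ => σ / τ₀) (1 / τ₀) τ := by
    simpa using (hasDerivAt_id τ).div_const τ₀
  have h2 : HasDerivAt (fun σ : ℝ => (σ / τ₀) ^ (-(B + 1)))
      ((1 / τ₀) * (-(B + 1)) * (τ / τ₀) ^ (-(B + 1) - 1)) τ :=
    h1.rpow_const (Or.inl hx.ne')
  have h3 : HasDerivAt (fun σ : ℝ => A * B * (B + 1) * (σ / τ₀) ^ (-(B + 1)))
      (A * B * (B + 1) * ((1 / τ₀) * (-(B + 1)) * (τ / τ₀) ^ (-(B + 1) - 1))) τ :=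
    h2.const_mul _
  rw [h3.deriv]
  set K : ℝ := A * B * (B + 1) * (τ / τ₀) ^ (-(B + 1)) with hK
  have hKpos : 0 < K := by positivity
  have hτd : τ * (A * B * (B + 1) * ((1 / τ₀) * (-(B + 1)) * (τ / τ₀) ^ (-(B + 1) - 1)))
      = (-(B + 1)) * K := by
    have : (τ / τ₀) ^ (-(B + 1) - 1) * (τ / τ₀) = (τ / τ₀) ^ (-(B + 1)) := by
      rw [← Real.rpow_add_one hx.ne']
      ring_nf
    rw [hK, ← this]
    field_simp
  rw [hτd]
  set D : ℝ := Γ₀ * (Γ₀ + 1) / τ * Δ with hD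
  have hDnn : 0 ≤ D := by positivity
  set m : ℝ := min (B + 1) (Γ₀ + 1) with hm
  have hm1 : m ≤ B + 1 := min_le_left _ _
  have hm2 : m ≤ Γ₀ + 1 := min_le_right _ _
  have hKD : 0 < K + D := by linarith
  constructor
  · have key : (-(B + 1) * K - (Γ₀ + 1) * D) / (K + D) ≤ -m := by
      rw [div_le_iff₀ hKD]
      nlinarith
    have : (Γ₀ + 1) * (Γ₀ * (Γ₀ + 1) / τ) * Δ = (Γ₀ + 1) * D := by
      rw [hD]; ring
    rw [this]
    linarith
  · have : 1 < m := lt_min (by linarith) (by linarith)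
    linarith
end

section
/- Let ρ_Z > 0, K_Z > 0 and p_Z ∈ ℝ, and set p∞ := K_Z − p_Z and c_Z := √(K_Z/ρ_Z). Then for every p > p_Z, the shock branch dominates the expansion branch: (p − p_Z)/√(ρ_Z·(p + p∞)) ≥ c_Z·log((p + p∞)/K_Z). -/
open Real

lemma key_s {s : ℝ} (hs : 1 ≤ s) : 2 * Real.log s ≤ s - s⁻¹ := by
  have hmono : MonotoneOn (fun x : ℝ => x - x⁻¹ - 2 * Real.log x) (Set.Ici 1) := by
    have hder : ∀ x : ℝ, x ∈ Set.Ioi (1:ℝ) →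
        HasDerivAt (fun x : ℝ => x - x⁻¹ - 2 * Real.log x)
          (1 - (-(x^2)⁻¹) - 2 * x⁻¹) x := by
      intro x hx
      have hx0 : x ≠ 0 := by
        have : (1:ℝ) < x := hx
        linarith
      exact ((hasDerivAt_id x).sub (hasDerivAt_inv hx0)).sub
        ((Real.hasDerivAt_log hx0).const_mul 2)
    apply monotoneOn_of_deriv_nonneg (convex_Ici 1)
    · apply ContinuousOn.sub
      · apply ContinuousOn.sub continuousOn_id
        exact continuousOn_inv₀.mono (by intro x hx; simp at hx ⊢; linarith)
      · exact (continuousOn_const.mul (Real.continuousOn_log.mono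
          (by intro x hx; simp at hx ⊢; linarith)))
    · intro x hx
      rw [interior_Ici] at hx
      exact ((hder x hx).differentiableAt).differentiableWithinAt
    · intro x hx
      rw [interior_Ici] at hx
      rw [(hder x hx).deriv]
      have hx1 : (1:ℝ) < x := hx
      have hx0 : 0 < x := by linarith
      have h2 : 0 < x^2 := by positivity
      have : 1 - (-(x ^ 2)⁻¹) - 2 * x⁻¹ = (x - 1)^2 / x^2 := by
        field_simp; ring
      rw [this]
      positivity
  have h1 : (1:ℝ) ∈ Set.Ici (1:ℝ) := Set.self_mem_Ici
  have hsS : s ∈ Set.Ici (1:ℝ) := hs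
  have := hmono h1 hsS hs
  simp at this
  linarith

lemma key_log_ineq {t : ℝ} (ht : 1 ≤ t) : Real.log t ≤ (t - 1) / Real.sqrt t := by
  have hs : 1 ≤ Real.sqrt t := by
    rw [show (1:ℝ) = Real.sqrt 1 by simp]
    exact Real.sqrt_le_sqrt ht
  set s := Real.sqrt t with hsdef
  have hs0 : 0 < s := by linarith
  have ht2 : t = s ^ 2 := (Real.sq_sqrt (by linarith : (0:ℝ) ≤ t)).symm
  have hlog : Real.log t = 2 * Real.log s := by
    rw [ht2, Real.log_pow]; norm_num
  have h1 := key_s hs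
  rw [hlog, ht2, le_div_iff₀ hs0]
  have hinv : s⁻¹ * s = 1 := inv_mul_cancel₀ hs0.ne'
  nlinarith [mul_le_mul_of_nonneg_right h1 hs0.le]

/-- Lemma C.1: in the ε → 0⁺ limit of the extended Riemann problem, the shock
branch dominates the expansion branch for `p > p_Z`:
`(p − p_Z)/√(ρ_Z(p + p∞)) ≥ c_Z log((p + p∞)/K_Z)` with `p∞ = K_Z − p_Z` and
`c_Z = √(K_Z/ρ_Z)`. -/
theorem stmt_10 (ρZ KZ pZ : ℝ) (hρ : 0 < ρZ) (hK : 0 < KZ) :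
    ∀ p > pZ,
      Real.sqrt (KZ / ρZ) * Real.log ((p + (KZ - pZ)) / KZ) ≤
        (p - pZ) / Real.sqrt (ρZ * (p + (KZ - pZ))) := by
  intro p hp
  set a := p + (KZ - pZ) with hadef
  have haK : KZ < a := by simp [hadef]; linarith
  have ha0 : 0 < a := lt_trans hK haK
  have ht : 1 ≤ a / KZ := by rw [le_div_iff₀ hK]; linarith
  have h1 : Real.log (a / KZ) ≤ (a / KZ - 1) / Real.sqrt (a / KZ) := key_log_ineq ht
  have h2 : Real.sqrt (KZ / ρZ) * Real.log (a / KZ) ≤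
      Real.sqrt (KZ / ρZ) * ((a / KZ - 1) / Real.sqrt (a / KZ)) :=
    mul_le_mul_of_nonneg_left h1 (Real.sqrt_nonneg _)
  have heq : Real.sqrt (KZ / ρZ) * ((a / KZ - 1) / Real.sqrt (a / KZ)) =
      (p - pZ) / Real.sqrt (ρZ * a) := by
    have hpp : p - pZ = a - KZ := by simp [hadef]; ring
    have hKne : Real.sqrt KZ ≠ 0 := (Real.sqrt_pos.mpr hK).ne'
    have hρne : Real.sqrt ρZ ≠ 0 := (Real.sqrt_pos.mpr hρ).ne'
    have hane : Real.sqrt a ≠ 0 := (Real.sqrt_pos.mpr ha0).ne'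
    have sK := Real.sq_sqrt hK.le
    have sρ := Real.sq_sqrt hρ.le
    have sa := Real.sq_sqrt ha0.le
    rw [hpp, Real.sqrt_div hK.le, Real.sqrt_div ha0.le, Real.sqrt_mul hρ.le]
    field_simp
    ring_nf
    rw [sK]
    ring
  linarith [h2, heq.le]
end

section
/- Let ρ_Z > 0, K_Z > 0 and p_Z ∈ ℝ, set c := √(K_Z/ρ_Z), and let p ∈ ℝ satisfy p + K_Z − p_Z > 0. For γ > 1 define p∞(γ) := K_Z/γ − p_Z and f^exp(p; γ) := (2c/(γ − 1))·(((p + p∞(γ))/(p_Z + p∞(γ)))^{(γ−1)/(2γ)} − 1). Then f^exp(p; γ) tends to c·log((p + K_Z − p_Z)/K_Z) as γ → 1⁺. -/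
open Real Filter

/-- Section 5.5: as γ → 1⁺, the stiffened-gas expansion wave function
`f^exp(p; γ) = (2c/(γ−1))(((p + p∞(γ))/(p_Z + p∞(γ)))^{(γ−1)/(2γ)} − 1)`
with `p∞(γ) = K_Z/γ − p_Z` and `c = √(K_Z/ρ_Z)` converges to the
non-degenerate limit `c log((p + K_Z − p_Z)/K_Z)`. -/
theorem stmt_11 (ρZ KZ pZ p : ℝ) (hρ : 0 < ρZ) (hK : 0 < KZ)
    (hp : 0 < p + KZ - pZ) :
    Filter.Tendsto
      (fun γ : ℝ =>
        (2 * Real.sqrt (KZ / ρZ) / (γ - 1)) *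
          (((p + (KZ / γ - pZ)) / (pZ + (KZ / γ - pZ))) ^ ((γ - 1) / (2 * γ))
            - 1))
      (nhdsWithin 1 (Set.Ioi 1))
      (nhds (Real.sqrt (KZ / ρZ) * Real.log ((p + KZ - pZ) / KZ))) := by
  set c := Real.sqrt (KZ / ρZ) with hc
  set L := Real.log ((p + KZ - pZ) / KZ) with hL
  set G : ℝ → ℝ := fun γ =>
    Real.exp (((γ - 1) / (2 * γ)) * (Real.log (γ * (p - pZ) + KZ) - Real.log KZ)) - 1 with hGdef
  have hw1 : (1 : ℝ) * (p - pZ) + KZ = p + KZ - pZ := by ring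
  have hwpos : 0 < (1 : ℝ) * (p - pZ) + KZ := by rw [hw1]; exact hp
  have hw : HasDerivAt (fun γ : ℝ => γ * (p - pZ) + KZ) (p - pZ) 1 := by
    simpa using ((hasDerivAt_id (1:ℝ)).mul_const (p - pZ)).add_const KZ
  have hs : HasDerivAt (fun γ : ℝ => (γ - 1) / (2 * γ)) (1/2) 1 := by
    have h1 : HasDerivAt (fun γ : ℝ => γ - 1) 1 1 := (hasDerivAt_id (1:ℝ)).sub_const 1
    have h2 : HasDerivAt (fun γ : ℝ => 2 * γ) 2 1 := by
      simpa using (hasDerivAt_id (1:ℝ)).const_mul 2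
    have := h1.fun_div h2 (by norm_num)
    refine this.congr_deriv ?_
    norm_num
  have hv : HasDerivAt (fun γ : ℝ => Real.log (γ * (p - pZ) + KZ) - Real.log KZ)
      ((p - pZ) / ((1:ℝ) * (p - pZ) + KZ)) 1 := (hw.log hwpos.ne').sub_const _
  have hu : HasDerivAt (fun γ : ℝ =>
      ((γ - 1) / (2 * γ)) * (Real.log (γ * (p - pZ) + KZ) - Real.log KZ)) (L / 2) 1 := by
    have := hs.fun_mul hv
    refine this.congr_deriv ?_
    rw [hL, hw1, Real.log_div hp.ne' hK.ne']
    norm_num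
    ring
  have hG : HasDerivAt G (L / 2) 1 := by
    have := hu.exp
    have h0 : (((1:ℝ) - 1) / (2 * 1)) * (Real.log (1 * (p - pZ) + KZ) - Real.log KZ) = 0 := by
      norm_num
    rw [hGdef]
    simpa [h0] using this.sub_const 1
  have hG1 : G 1 = 0 := by
    simp [hGdef]
  have hslope : Tendsto (fun γ => 2 * c * ((G γ - G 1) / (γ - 1)))
      (nhdsWithin 1 (Set.Ioi 1)) (nhds (2 * c * (L / 2))) := by
    have := hasDerivAt_iff_tendsto_slope.mp hG
    have h2 := this.mono_left (nhdsWithin_mono 1 (by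
      intro x hx
      simp only [Set.mem_compl_iff, Set.mem_singleton_iff]
      exact ne_of_gt hx))
    have h3 : Tendsto (fun γ => (G γ - G 1) / (γ - 1)) (nhdsWithin 1 (Set.Ioi 1)) (nhds (L/2)) := by
      refine h2.congr (fun γ => ?_)
      simp [slope, div_eq_inv_mul]
    exact h3.const_mul _
  have hkey : (2 * c * (L / 2)) = c * L := by ring
  rw [← hkey]
  refine Tendsto.congr' ?_ hslope
  have hpos : ∀ᶠ γ in nhdsWithin 1 (Set.Ioi 1), 0 < γ * (p - pZ) + KZ := by
    apply eventually_nhdsWithin_of_eventually_nhds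
    have hcont : Continuous fun γ : ℝ => γ * (p - pZ) + KZ := by continuity
    exact (hcont.tendsto 1).eventually (eventually_gt_nhds (by linarith))
  filter_upwards [hpos, self_mem_nhdsWithin] with γ hwγ hγ
  have hγ1 : (1:ℝ) < γ := hγ
  have hγ0 : (0:ℝ) < γ := lt_trans one_pos hγ1
  have hbase : (p + (KZ / γ - pZ)) / (pZ + (KZ / γ - pZ)) = (γ * (p - pZ) + KZ) / KZ := by
    rw [div_eq_div_iff]
    · field_simp
      ring
    · have : pZ + (KZ / γ - pZ) = KZ / γ := by ring
      rw [this]; positivity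
    · exact hK.ne'
  have hbpos : 0 < (γ * (p - pZ) + KZ) / KZ := div_pos hwγ hK
  have hrpow : ((γ * (p - pZ) + KZ) / KZ) ^ ((γ - 1) / (2 * γ)) =
      Real.exp (((γ - 1) / (2 * γ)) * (Real.log (γ * (p - pZ) + KZ) - Real.log KZ)) := by
    rw [Real.rpow_def_of_pos hbpos, Real.log_div hwγ.ne' hK.ne']
    ring_nf
  rw [hG1, hbase, hrpow, hGdef]
  ring
end

section
/- Let ρ_L > 0, ρ_R > 0, v_L, v_R ∈ ℝ, and let p_L, p_R, p∞_max ∈ ℝ satisfy p_L + p∞_max > 0 and p_R + p∞_max > 0. Define a := √ρ_L + √ρ_R, b := √(ρ_L·ρ_R)·(v_R − v_L), c := −√ρ_R·(p_L + p∞_max) − √ρ_L·(p_R + p∞_max), and p̂*_SS := ((−b + √(b² − 4ac))/(2a))² − p∞_max. Then b² − 4ac > 0, p̂*_SS > −p∞_max, and φ̂_SS(p̂*_SS) = 0, where φ̂_SS(p) := (p − p_L)/√(ρ_L·(p + p∞_max)) + (p − p_R)/√(ρ_R·(p + p∞_max)) + v_R − v_L. -/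
open Real

/-- Section 5.5.1, equation (5.12): the double-shock lower-bound function
`φ̂_SS(p) = (p − p_L)/√(ρ_L(p + p∞_max)) + (p − p_R)/√(ρ_R(p + p∞_max))
  + v_R − v_L` has the explicit root
`p̂*_SS = ((−b + √(b² − 4ac))/(2a))² − p∞_max` obtained from the quadratic
formula, where `a = √ρ_L + √ρ_R`, `b = √(ρ_Lρ_R)(v_R − v_L)`,
`c = −√ρ_R(p_L + p∞_max) − √ρ_L(p_R + p∞_max)`. -/
theorem stmt_14 (ρL ρR vL vR pL pR pinfmax : ℝ)
    (hρL : 0 < ρL) (hρR : 0 < ρR)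
    (hL : 0 < pL + pinfmax) (hR : 0 < pR + pinfmax)
    (a b c : ℝ)
    (ha : a = Real.sqrt ρL + Real.sqrt ρR)
    (hb : b = Real.sqrt (ρL * ρR) * (vR - vL))
    (hc : c = -Real.sqrt ρR * (pL + pinfmax) - Real.sqrt ρL * (pR + pinfmax))
    (pstar : ℝ)
    (hpstar : pstar = ((-b + Real.sqrt (b ^ 2 - 4 * a * c)) / (2 * a)) ^ 2
      - pinfmax) :
    0 < b ^ 2 - 4 * a * c ∧
    -pinfmax < pstar ∧
    (pstar - pL) / Real.sqrt (ρL * (pstar + pinfmax))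
      + (pstar - pR) / Real.sqrt (ρR * (pstar + pinfmax)) + vR - vL = 0 := by
  have hsl : 0 < Real.sqrt ρL := Real.sqrt_pos.2 hρL
  have hsr : 0 < Real.sqrt ρR := Real.sqrt_pos.2 hρR
  have ha' : 0 < a := by rw [ha]; linarith
  have hcneg : c < 0 := by rw [hc]; nlinarith
  have hD : 0 < b ^ 2 - 4 * a * c := by nlinarith [sq_nonneg b]
  set s := Real.sqrt (b ^ 2 - 4 * a * c) with hs
  have hs2 : s ^ 2 = b ^ 2 - 4 * a * c := Real.sq_sqrt hD.le
  have habs : |b| < s := by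
    rw [← Real.sqrt_sq_eq_abs]
    exact Real.sqrt_lt_sqrt (sq_nonneg b) (by nlinarith)
  have hbs : 0 < -b + s := by
    have := neg_abs_le b
    have := le_abs_self b
    linarith
  set x := (-b + s) / (2 * a) with hx
  have hxpos : 0 < x := div_pos hbs (by linarith)
  have hroot : a * x ^ 2 + b * x + c = 0 := by
    rw [hx]; field_simp; nlinarith [hs2]
  have hpp : pstar + pinfmax = x ^ 2 := by rw [hpstar]; ring
  refine ⟨hD, by nlinarith, ?_⟩
  have hmul : Real.sqrt (ρL * ρR) = Real.sqrt ρL * Real.sqrt ρR :=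
    Real.sqrt_mul hρL.le _
  rw [show ρL * (pstar + pinfmax) = ρL * x ^ 2 by rw [hpp],
      show ρR * (pstar + pinfmax) = ρR * x ^ 2 by rw [hpp],
      Real.sqrt_mul hρL.le, Real.sqrt_mul hρR.le,
      Real.sqrt_sq hxpos.le]
  have hps : pstar = x ^ 2 - pinfmax := by linarith
  rw [hps]
  clear_value x s
  field_simp
  linear_combination hroot - x ^ 2 * ha - x * hb - x * (vR - vL) * hmul - hc
end

section
/- Let d ≥ 1 and let g : (0,∞) → ℝ be twice differentiable with g''(τ) ≥ 0 for all τ > 0. Then the set 𝒜 := {(ρ, m, E) ∈ ℝ × ℝ^d × ℝ : ρ > 0 and E − ‖m‖²/(2ρ) ≥ ρ·g(1/ρ)} is convex. -/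
open RealInnerProductSpace

-- convexity of g on Ioi 0
lemma gconv (g g' g'' : ℝ → ℝ)
    (hg' : ∀ τ > (0 : ℝ), HasDerivAt g (g' τ) τ)
    (hg'' : ∀ τ > (0 : ℝ), HasDerivAt g' (g'' τ) τ)
    (hconv : ∀ τ > (0 : ℝ), 0 ≤ g'' τ) :
    ConvexOn ℝ (Set.Ioi (0:ℝ)) g := by
  have hint : interior (Set.Ioi (0:ℝ)) = Set.Ioi 0 := interior_Ioi
  have hdg : ∀ x ∈ Set.Ioi (0:ℝ), deriv g x = g' x := fun x hx => (hg' x hx).deriv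
  apply convexOn_of_deriv2_nonneg (convex_Ioi 0)
  · exact fun x hx => ((hg' x hx).continuousAt).continuousWithinAt
  · rw [hint]; exact fun x hx => ((hg' x hx).differentiableAt).differentiableWithinAt
  · rw [hint]
    intro x hx
    have : HasDerivAt (deriv g) (g'' x) x := by
      refine (hg'' x hx).congr_of_eventuallyEq ?_
      filter_upwards [isOpen_Ioi.mem_nhds hx] with y hy using (hdg y hy)
    exact this.differentiableAt.differentiableWithinAt
  · rw [hint]
    intro x hx
    have h1 : HasDerivAt (deriv g) (g'' x) x := by
      refine (hg'' x hx).congr_of_eventuallyEq ?_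
      filter_upwards [isOpen_Ioi.mem_nhds hx] with y hy using (hdg y hy)
    simpa [Function.iterate_succ, h1.deriv] using hconv x hx

lemma warg (a b ρ₁ ρ₂ : ℝ) (hab : a + b = 1) (h1 : ρ₁ ≠ 0) (h2 : ρ₂ ≠ 0)
    (h : a * ρ₁ + b * ρ₂ ≠ 0) :
    (a * ρ₁ / (a * ρ₁ + b * ρ₂)) • (1/ρ₁) + (b * ρ₂ / (a * ρ₁ + b * ρ₂)) • (1/ρ₂)
      = 1/(a * ρ₁ + b * ρ₂) := by
  have hb : b = 1 - a := by linarith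
  subst hb
  simp only [smul_eq_mul]
  field_simp
  ring

/-- Convexity of the admissible (invariant) set (2.8): for a twice
differentiable convex energy isentrope `g`, the set
`𝒜 = {(ρ, m, E) : ρ > 0 and E − ‖m‖²/(2ρ) ≥ ρ g(1/ρ)}` is convex. -/
theorem stmt_18 (d : ℕ) (hd : 1 ≤ d) (g g' g'' : ℝ → ℝ)
    (hg' : ∀ τ > (0 : ℝ), HasDerivAt g (g' τ) τ)
    (hg'' : ∀ τ > (0 : ℝ), HasDerivAt g' (g'' τ) τ)
    (hconv : ∀ τ > (0 : ℝ), 0 ≤ g'' τ) :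
    Convex ℝ {u : ℝ × EuclideanSpace ℝ (Fin d) × ℝ |
      0 < u.1 ∧ u.1 * g (1 / u.1) ≤ u.2.2 - ‖u.2.1‖ ^ 2 / (2 * u.1)} := by
  have hcg := gconv g g' g'' hg' hg'' hconv
  rintro ⟨ρ₁, m₁, E₁⟩ ⟨h₁, H₁⟩ ⟨ρ₂, m₂, E₂⟩ ⟨h₂, H₂⟩ a b ha hb hab
  simp only [Set.mem_setOf_eq, Prod.smul_mk, Prod.mk_add_mk, smul_eq_mul] at *
  set ρ : ℝ := a * ρ₁ + b * ρ₂ with hρdef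
  have hρ : 0 < ρ := by
    rcases eq_or_lt_of_le ha with h | h
    · simp [hρdef, ← h, (by linarith : b = 1), h₂]
    · have : 0 ≤ b * ρ₂ := mul_nonneg hb h₂.le
      have : 0 < a * ρ₁ := mul_pos h h₁
      positivity
  refine ⟨hρ, ?_⟩
  -- kinetic part
  have hI : ⟪m₁, m₂⟫ ≤ ‖m₁‖ * ‖m₂‖ := real_inner_le_norm m₁ m₂
  have hexp : ‖a • m₁ + b • m₂‖ ^ 2
      = a^2 * ‖m₁‖^2 + 2*(a*b)*⟪m₁, m₂⟫ + b^2 * ‖m₂‖^2 := by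
    rw [@norm_add_sq_real]
    rw [norm_smul, norm_smul, real_inner_smul_left, real_inner_smul_right]
    simp [abs_of_nonneg ha, abs_of_nonneg hb, mul_pow]
    ring
  have hkin : ‖a • m₁ + b • m₂‖ ^ 2 / (2 * ρ)
      ≤ a * (‖m₁‖^2 / (2*ρ₁)) + b * (‖m₂‖^2 / (2*ρ₂)) := by
    rw [div_le_iff₀ (by positivity), hexp]
    have h2 : ⟪m₁, m₂⟫ * (2*a*b*ρ₁*ρ₂) ≤ ‖m₁‖*‖m₂‖ * (2*a*b*ρ₁*ρ₂) :=
      mul_le_mul_of_nonneg_right hI (by positivity)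
    have e : a * (‖m₁‖^2 / (2*ρ₁)) + b * (‖m₂‖^2 / (2*ρ₂))
        = (a*‖m₁‖^2*ρ₂ + b*‖m₂‖^2*ρ₁) / (2*ρ₁*ρ₂) := by
      field_simp
    rw [e, div_mul_eq_mul_div, le_div_iff₀ (by positivity)]
    rw [hρdef]
    nlinarith [h2, mul_nonneg (mul_nonneg ha hb) (sq_nonneg (‖m₁‖*ρ₂ - ‖m₂‖*ρ₁))]
  -- internal energy / perspective part
  have hpers : ρ * g (1/ρ) ≤ a * (ρ₁ * g (1/ρ₁)) + b * (ρ₂ * g (1/ρ₂)) := by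
    have hw1 : (0:ℝ) ≤ a * ρ₁ / ρ := by positivity
    have hw2 : (0:ℝ) ≤ b * ρ₂ / ρ := by positivity
    have hwsum : a * ρ₁ / ρ + b * ρ₂ / ρ = 1 := by field_simp; exact hρdef.symm
    have key := hcg.2 (Set.mem_Ioi.2 (by positivity : (0:ℝ) < 1/ρ₁))
      (Set.mem_Ioi.2 (by positivity : (0:ℝ) < 1/ρ₂)) hw1 hw2 hwsum
    have harg : (a * ρ₁ / ρ) • (1/ρ₁) + (b * ρ₂ / ρ) • (1/ρ₂) = 1/ρ :=
      warg a b ρ₁ ρ₂ hab (ne_of_gt h₁) (ne_of_gt h₂) (ne_of_gt hρ)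
    rw [harg] at key
    simp only [smul_eq_mul] at key
    have := mul_le_mul_of_nonneg_left key hρ.le
    calc ρ * g (1/ρ) ≤ ρ * ((a*ρ₁/ρ) * g (1/ρ₁) + (b*ρ₂/ρ) * g (1/ρ₂)) := this
      _ = a * (ρ₁ * g (1/ρ₁)) + b * (ρ₂ * g (1/ρ₂)) := by field_simp
  have HA := mul_le_mul_of_nonneg_left H₁ ha
  have HB := mul_le_mul_of_nonneg_left H₂ hb
  have : a * (ρ₁ * g (1/ρ₁)) + b * (ρ₂ * g (1/ρ₂))
      ≤ a*E₁ + b*E₂ - (a * (‖m₁‖^2/(2*ρ₁)) + b * (‖m₂‖^2/(2*ρ₂))) := by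
    rw [mul_sub] at HA HB
    linarith
  linarith
end
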